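/- In the free algebra A = ℂ⟨x,y⟩, for any f ∈ A the element (∂f/∂x)' x (∂f/∂x)'' + (∂f/∂y)' y (∂f/∂y)'' is congruent modulo [A,A] to deg(f)·f when f is homogeneous of total degree deg(f) (counting total degree in x and y); consequently if (∂f/∂x)''(∂f/∂x)' = 0 and (∂f/∂y)''(∂f/∂y)' = 0 then f ∈ ℂ ⊕ [A,A]. -/

import Mathlib

open TensorProduct

noncomputable section

abbrev A2 := FreeAlgebra ℂ (Fin 2)

def Xg : A2 := FreeAlgebra.ι ℂ 0
def Yg : A2 := FreeAlgebra.ι ℂ 1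

def mu : A2 ⊗[ℂ] A2 →ₗ[ℂ] A2 := LinearMap.mul' ℂ A2

/-- `u ⊗ v ↦ v * u`. -/
def mulRev : A2 ⊗[ℂ] A2 →ₗ[ℂ] A2 :=
  mu ∘ₗ (TensorProduct.comm ℂ A2 A2).toLinearMap

def commSpan : Submodule ℂ A2 :=
  Submodule.span ℂ {z : A2 | ∃ a b : A2, z = a * b - b * a}

/-- The homogeneous component of total degree `n`: the span of products of `n` generators. -/
def homog (n : ℕ) : Submodule ℂ A2 :=
  Submodule.span ℂ {p : A2 | ∃ l : List (Fin 2), l.length = n ∧ p = (l.map (FreeAlgebra.ι ℂ)).prod}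

namespace Aux

abbrev ee : A2 ≃ₐ[ℂ] MonoidAlgebra ℂ (FreeMonoid (Fin 2)) :=
  FreeAlgebra.equivMonoidAlgebraFreeMonoid

def word (l : List (Fin 2)) : A2 := (l.map (FreeAlgebra.ι ℂ)).prod

lemma word_mul (u v : List (Fin 2)) : word u * word v = word (u ++ v) := by
  simp [word, List.map_append, List.prod_append]

lemma ee_word (l : List (Fin 2)) :
    ee (word l) = MonoidAlgebra.single (FreeMonoid.ofList l) 1 := by
  induction l with
  | nil =>
      simp [word, FreeMonoid.ofList_nil]
      rfl
  | cons i t ih =>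
      have : word (i :: t) = FreeAlgebra.ι ℂ i * word t := by simp [word]
      rw [this, map_mul, ih]
      have h1 : ee (FreeAlgebra.ι ℂ i)
          = MonoidAlgebra.single (FreeMonoid.of i) 1 := by
        simp [ee, FreeAlgebra.equivMonoidAlgebraFreeMonoid]
      rw [h1, MonoidAlgebra.single_mul_single, one_mul]
      congr 1

lemma word_eq (l : List (Fin 2)) :
    word l = ee.symm (MonoidAlgebra.single (FreeMonoid.ofList l) 1) := by
  rw [← ee_word, AlgEquiv.symm_apply_apply]

def filt (n : ℕ) :
    MonoidAlgebra ℂ (FreeMonoid (Fin 2)) →ₗ[ℂ] MonoidAlgebra ℂ (FreeMonoid (Fin 2)) where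
  toFun g := .ofCoeff (g.coeff.filter (fun w => (FreeMonoid.toList w).length = n))
  map_add' _ _ := by
    simp only [MonoidAlgebra.coeff_add, Finsupp.filter_add, MonoidAlgebra.ofCoeff_add]
  map_smul' _ _ := by
    simp only [MonoidAlgebra.coeff_smul, Finsupp.filter_smul, MonoidAlgebra.ofCoeff_smul,
      RingHom.id_apply]

/-- Projection onto the degree-`n` homogeneous component. -/
def P (n : ℕ) : A2 →ₗ[ℂ] A2 :=
  ee.symm.toLinearMap ∘ₗ filt n ∘ₗ ee.toLinearMap

lemma P_word (n : ℕ) (l : List (Fin 2)) :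
    P n (word l) = if l.length = n then word l else 0 := by
  by_cases h : l.length = n
  · rw [if_pos h]
    simp only [P, LinearMap.comp_apply, AlgEquiv.toLinearMap_apply, ee_word, filt,
      LinearMap.coe_mk, AddHom.coe_mk, MonoidAlgebra.coeff_single]
    rw [Finsupp.filter_single_of_pos]
    · exact (word_eq l).symm
    · simpa using h
  · rw [if_neg h]
    simp only [P, LinearMap.comp_apply, AlgEquiv.toLinearMap_apply, ee_word, filt,
      LinearMap.coe_mk, AddHom.coe_mk, MonoidAlgebra.coeff_single]
    rw [Finsupp.filter_single_of_neg]
    · simp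
    · simpa using h

lemma mem_span_words (f : A2) : f ∈ Submodule.span ℂ (Set.range word) := by
  have h : f = ee.symm (ee f) := (AlgEquiv.symm_apply_apply _ _).symm
  rw [h]
  generalize ee f = g
  induction g using MonoidAlgebra.induction with
  | zero => simp
  | single_add w c g _ _ ih =>
      rw [map_add]
      refine Submodule.add_mem _ ?_ ih
      have : (MonoidAlgebra.single w c : MonoidAlgebra ℂ (FreeMonoid (Fin 2)))
          = c • MonoidAlgebra.single w (1 : ℂ) := by
        rw [MonoidAlgebra.smul_single', mul_one]
      rw [this, map_smul]
      refine Submodule.smul_mem _ _ ?_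
      have hw : ee.symm (MonoidAlgebra.single w 1) = word (FreeMonoid.toList w) := by
        rw [word_eq]
        congr 1
      rw [hw]
      exact Submodule.subset_span ⟨_, rfl⟩

lemma P_homog_eq {n : ℕ} {f : A2} (h : f ∈ homog n) : P n f = f := by
  induction h using Submodule.span_induction with
  | mem p hp =>
      obtain ⟨l, hl, rfl⟩ := hp
      have := P_word n l
      rw [if_pos hl] at this
      exact this
  | zero => simp
  | add x y _ _ hx hy => rw [map_add, hx, hy]
  | smul a x _ hx => rw [map_smul, hx]

lemma P_homog_ne {m n : ℕ} {f : A2} (h : f ∈ homog m) (hne : m ≠ n) : P n f = 0 := by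
  induction h using Submodule.span_induction with
  | mem p hp =>
      obtain ⟨l, hl, rfl⟩ := hp
      have := P_word n l
      rw [if_neg (by rw [hl]; exact hne)] at this
      exact this
  | zero => simp
  | add x y _ _ hx hy => rw [map_add, hx, hy, add_zero]
  | smul a x _ hx => rw [map_smul, hx, smul_zero]

lemma P_comm {n : ℕ} {z : A2} (hz : z ∈ commSpan) : P n z ∈ commSpan := by
  induction hz using Submodule.span_induction with
  | mem p hp =>
      obtain ⟨a, b, rfl⟩ := hp
      -- double induction over span of words
      have key : ∀ a ∈ Submodule.span ℂ (Set.range word),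
          ∀ b ∈ Submodule.span ℂ (Set.range word),
          P n (a * b - b * a) ∈ commSpan := by
        intro a ha
        induction ha using Submodule.span_induction with
        | mem u hu =>
            obtain ⟨u, rfl⟩ := hu
            intro b hb
            induction hb using Submodule.span_induction with
            | mem v hv =>
                obtain ⟨v, rfl⟩ := hv
                rw [word_mul, word_mul]
                rw [map_sub, P_word, P_word]
                have hlen : (v ++ u).length = (u ++ v).length := by
                  simp [Nat.add_comm]
                by_cases h : (u ++ v).length = n
                · rw [if_pos h, if_pos (hlen.trans h)]
                  rw [← word_mul, ← word_mul]
                  exact Submodule.subset_span ⟨word u, word v, rfl⟩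
                · rw [if_neg h, if_neg (fun hc => h (hlen ▸ hc))]
                  simpa using Submodule.zero_mem commSpan
            | zero => simpa using Submodule.zero_mem commSpan
            | add x y hx hy ihx ihy =>
                have : word u * (x + y) - (x + y) * word u
                    = (word u * x - x * word u) + (word u * y - y * word u) := by
                  noncomm_ring
                rw [this, map_add]
                exact Submodule.add_mem _ ihx ihy
            | smul c x hx ihx =>
                have : word u * (c • x) - (c • x) * word u
                    = c • (word u * x - x * word u) := by
                  rw [mul_smul_comm, smul_mul_assoc, smul_sub]
                rw [this, map_smul]
                exact Submodule.smul_mem _ _ ihx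
        | zero =>
            intro b _; simpa using Submodule.zero_mem commSpan
        | add x y hx hy ihx ihy =>
            intro b hb
            have : (x + y) * b - b * (x + y)
                = (x * b - b * x) + (y * b - b * y) := by noncomm_ring
            rw [this, map_add]
            exact Submodule.add_mem _ (ihx b hb) (ihy b hb)
        | smul c x hx ihx =>
            intro b hb
            have : (c • x) * b - b * (c • x) = c • (x * b - b * x) := by
              rw [mul_smul_comm, smul_mul_assoc, smul_sub]
            rw [this, map_smul]
            exact Submodule.smul_mem _ _ (ihx b hb)
      exact key a (mem_span_words a) b (mem_span_words b)
  | zero => simpa using Submodule.zero_mem commSpan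
  | add x y _ _ hx hy => rw [map_add]; exact Submodule.add_mem _ hx hy
  | smul a x _ hx => rw [map_smul]; exact Submodule.smul_mem _ _ hx

lemma mu_lmul (a : A2) (w : A2 ⊗[ℂ] A2) :
    mu (((a : A2) ⊗ₜ[ℂ] (1 : A2)) * w) = a * mu w := by
  induction w using TensorProduct.induction_on with
  | zero => simp
  | tmul u v => simp [mu, Algebra.TensorProduct.tmul_mul_tmul, LinearMap.mul'_apply, mul_assoc]
  | add x y hx hy => rw [mul_add, map_add, map_add, hx, hy, mul_add]

lemma mulRev_tmul (a b : A2) : mulRev (a ⊗ₜ[ℂ] b) = b * a := by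
  simp [mulRev, mu, LinearMap.mul'_apply]

/-- Cyclic symmetry mod commutators. -/
lemma cyc (g : A2) (w : A2 ⊗[ℂ] A2) :
    mu (w * (g ⊗ₜ[ℂ] (1 : A2))) - g * mulRev w ∈ commSpan := by
  induction w using TensorProduct.induction_on with
  | zero => simpa using Submodule.zero_mem commSpan
  | tmul a b =>
      rw [mulRev_tmul, Algebra.TensorProduct.tmul_mul_tmul, mul_one]
      have h1 : mu ((a * g) ⊗ₜ[ℂ] b) = (a * g) * b := by simp [mu, LinearMap.mul'_apply]
      rw [h1]
      have : a * g * b - g * (b * a) = a * (g * b) - (g * b) * a := by noncomm_ring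
      rw [this]
      exact Submodule.subset_span ⟨a, g * b, rfl⟩
  | add x y hx hy =>
      have : mu ((x + y) * (g ⊗ₜ[ℂ] (1 : A2))) - g * mulRev (x + y)
          = (mu (x * (g ⊗ₜ[ℂ] (1 : A2))) - g * mulRev x)
            + (mu (y * (g ⊗ₜ[ℂ] (1 : A2))) - g * mulRev y) := by
        rw [add_mul, map_add, map_add, mul_add]; abel
      rw [this]
      exact Submodule.add_mem _ hx hy

section Euler

variable (Dx Dy : A2 →ₗ[ℂ] A2 ⊗[ℂ] A2)
variable (hLx : ∀ u v : A2,
      Dx (u * v) = (u ⊗ₜ[ℂ] (1 : A2)) * Dx v + Dx u * ((1 : A2) ⊗ₜ[ℂ] v))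
variable (hLy : ∀ u v : A2,
      Dy (u * v) = (u ⊗ₜ[ℂ] (1 : A2)) * Dy v + Dy u * ((1 : A2) ⊗ₜ[ℂ] v))
variable (hxx : Dx Xg = (1 : A2) ⊗ₜ[ℂ] (1 : A2)) (hxy : Dx Yg = 0)
variable (hyx : Dy Xg = 0) (hyy : Dy Yg = (1 : A2) ⊗ₜ[ℂ] (1 : A2))

include hLx in
lemma Dx_one : Dx 1 = 0 := by
  have h := hLx 1 1
  rw [mul_one] at h
  have h1 : ((1 : A2) ⊗ₜ[ℂ] (1 : A2)) = (1 : A2 ⊗[ℂ] A2) := rfl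
  rw [h1, one_mul, mul_one] at h
  exact (left_eq_add.mp h)

include hLx hLy hxx hxy hyx hyy in
lemma euler_word (l : List (Fin 2)) :
    mu (Dx (word l) * (Xg ⊗ₜ[ℂ] (1 : A2))) + mu (Dy (word l) * (Yg ⊗ₜ[ℂ] (1 : A2)))
      = (l.length : ℂ) • word l := by
  induction l with
  | nil =>
      have h1 : word [] = 1 := rfl
      rw [h1, Dx_one Dx hLx, Dx_one Dy hLy]
      simp
  | cons i t ih =>
      have hw : word (i :: t) = FreeAlgebra.ι ℂ i * word t := by simp [word]
      rw [hw, hLx, hLy]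
      rw [add_mul, add_mul, map_add, map_add]
      have e1 : ∀ (D : A2 →ₗ[ℂ] A2 ⊗[ℂ] A2) (g : A2),
          mu ((FreeAlgebra.ι ℂ i ⊗ₜ[ℂ] (1 : A2)) * D (word t) * (g ⊗ₜ[ℂ] (1 : A2)))
            = FreeAlgebra.ι ℂ i * mu (D (word t) * (g ⊗ₜ[ℂ] (1 : A2))) := by
        intro D g
        rw [mul_assoc, mu_lmul]
      rw [e1, e1]
      have e2 : ∀ (z : A2 ⊗[ℂ] A2) (g : A2),
          z * ((1 : A2) ⊗ₜ[ℂ] word t) * (g ⊗ₜ[ℂ] (1 : A2)) = z * (g ⊗ₜ[ℂ] word t) := by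
        intro z g
        rw [mul_assoc, Algebra.TensorProduct.tmul_mul_tmul, one_mul, mul_one]
      rw [e2, e2]
      have hcast : ((i :: t).length : ℂ) = (t.length : ℂ) + 1 := by
        simp [Nat.cast_add]
      rw [hcast]
      fin_cases i <;> simp only [Fin.zero_eta, Fin.mk_one]
      · rw [show FreeAlgebra.ι ℂ (0 : Fin 2) = Xg from rfl, hxx, hyx]
        simp only [Algebra.TensorProduct.tmul_mul_tmul, one_mul, zero_mul, map_zero, add_zero]
        have h3 : mu ((Xg : A2) ⊗ₜ[ℂ] word t) = Xg * word t := by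
          simp [mu, LinearMap.mul'_apply]
        rw [h3]
        have hr : ((t.length : ℂ) + 1) • (Xg * word t)
            = Xg * (mu (Dx (word t) * (Xg ⊗ₜ[ℂ] (1 : A2)))
                + mu (Dy (word t) * (Yg ⊗ₜ[ℂ] (1 : A2)))) + Xg * word t := by
          rw [ih, mul_smul_comm, add_smul, one_smul]
        rw [hr, mul_add]
        abel
      · rw [show FreeAlgebra.ι ℂ (1 : Fin 2) = Yg from rfl, hxy, hyy]
        simp only [Algebra.TensorProduct.tmul_mul_tmul, one_mul, zero_mul, map_zero, add_zero]
        have h3 : mu ((Yg : A2) ⊗ₜ[ℂ] word t) = Yg * word t := by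
          simp [mu, LinearMap.mul'_apply]
        rw [h3]
        have hr : ((t.length : ℂ) + 1) • (Yg * word t)
            = Yg * (mu (Dx (word t) * (Xg ⊗ₜ[ℂ] (1 : A2)))
                + mu (Dy (word t) * (Yg ⊗ₜ[ℂ] (1 : A2)))) + Yg * word t := by
          rw [ih, mul_smul_comm, add_smul, one_smul]
        rw [hr, mul_add]
        abel

include hLx hLy hxx hxy hyx hyy in
lemma euler_homog {n : ℕ} {f : A2} (h : f ∈ homog n) :
    mu (Dx f * (Xg ⊗ₜ[ℂ] (1 : A2))) + mu (Dy f * (Yg ⊗ₜ[ℂ] (1 : A2)))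
      = (n : ℂ) • f := by
  induction h using Submodule.span_induction with
  | mem p hp =>
      obtain ⟨l, hl, rfl⟩ := hp
      rw [← hl]
      exact euler_word Dx Dy hLx hLy hxx hxy hyx hyy l
  | zero => simp
  | add x y _ _ hx hy =>
      rw [map_add, map_add, add_mul, add_mul, map_add, map_add, smul_add, ← hx, ← hy]
      abel
  | smul a x _ hx =>
      rw [map_smul, map_smul, smul_mul_assoc, smul_mul_assoc, map_smul, map_smul,
        ← smul_add, hx, smul_comm]

end Euler

lemma homog_zero_eq {f : A2} (h : f ∈ homog 0) : ∃ c : ℂ, f = algebraMap ℂ A2 c := by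
  have hset : {p : A2 | ∃ l : List (Fin 2), l.length = 0 ∧ p = (l.map (FreeAlgebra.ι ℂ)).prod}
      = {(1 : A2)} := by
    ext p
    constructor
    · rintro ⟨l, hl, rfl⟩
      rw [List.length_eq_zero_iff] at hl
      subst hl
      simp
    · rintro rfl
      exact ⟨[], rfl, by simp⟩
  rw [homog, hset] at h
  obtain ⟨c, hc⟩ := Submodule.mem_span_singleton.mp h
  exact ⟨c, by rw [← hc, Algebra.algebraMap_eq_smul_one]⟩

end Aux

/-- NC-Euler: for `f` homogeneous of total degree `n`,
`(∂f/∂x)' x (∂f/∂x)'' + (∂f/∂y)' y (∂f/∂y)'' ≡ n·f mod [A,A]`; consequently, if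
`(∂f/∂x)''(∂f/∂x)' = 0` and `(∂f/∂y)''(∂f/∂y)' = 0` then `f ∈ ℂ ⊕ [A,A]`. -/
theorem stmt_15 (Dx Dy : A2 →ₗ[ℂ] A2 ⊗[ℂ] A2)
    (hLx : ∀ u v : A2,
      Dx (u * v) = (u ⊗ₜ[ℂ] (1 : A2)) * Dx v + Dx u * ((1 : A2) ⊗ₜ[ℂ] v))
    (hLy : ∀ u v : A2,
      Dy (u * v) = (u ⊗ₜ[ℂ] (1 : A2)) * Dy v + Dy u * ((1 : A2) ⊗ₜ[ℂ] v))
    (hxx : Dx Xg = (1 : A2) ⊗ₜ[ℂ] (1 : A2)) (hxy : Dx Yg = 0)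
    (hyx : Dy Xg = 0) (hyy : Dy Yg = (1 : A2) ⊗ₜ[ℂ] (1 : A2)) :
    (∀ (n : ℕ) (f : A2), f ∈ homog n →
      mu (Dx f * (Xg ⊗ₜ[ℂ] (1 : A2))) + mu (Dy f * (Yg ⊗ₜ[ℂ] (1 : A2)))
        - (n : ℂ) • f ∈ commSpan) ∧
    (∀ f : A2, mulRev (Dx f) = 0 → mulRev (Dy f) = 0 →
      ∃ c : ℂ, f - algebraMap ℂ A2 c ∈ commSpan) := by
  constructor
  · intro n f hf
    rw [Aux.euler_homog Dx Dy hLx hLy hxx hxy hyx hyy hf, sub_self]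
    exact Submodule.zero_mem commSpan
  · intro f hfx hfy
    set EL : A2 →ₗ[ℂ] A2 :=
      mu ∘ₗ LinearMap.mulRight ℂ (Xg ⊗ₜ[ℂ] (1 : A2)) ∘ₗ Dx
        + mu ∘ₗ LinearMap.mulRight ℂ (Yg ⊗ₜ[ℂ] (1 : A2)) ∘ₗ Dy with hEL
    have hELapp : ∀ g : A2,
        EL g = mu (Dx g * (Xg ⊗ₜ[ℂ] (1 : A2))) + mu (Dy g * (Yg ⊗ₜ[ℂ] (1 : A2))) := by
      intro g
      simp [hEL, LinearMap.mulRight_apply]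
    have hEf : EL f ∈ commSpan := by
      rw [hELapp]
      have h1 := Aux.cyc Xg (Dx f)
      rw [hfx, mul_zero, sub_zero] at h1
      have h2 := Aux.cyc Yg (Dy f)
      rw [hfy, mul_zero, sub_zero] at h2
      exact Submodule.add_mem _ h1 h2
    have hfi : f ∈ ⨆ n, homog n := by
      refine Submodule.span_le.mpr ?_ (Aux.mem_span_words f)
      rintro p ⟨l, rfl⟩
      exact Submodule.mem_iSup_of_mem l.length (Submodule.subset_span ⟨l, rfl, rfl⟩)
    obtain ⟨c, hc, hsum⟩ := (Submodule.mem_iSup_iff_exists_finsupp _ _).mp hfi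
    have hELc : ∀ m, EL (c m) = (m : ℂ) • c m := fun m => by
      rw [hELapp]
      exact Aux.euler_homog Dx Dy hLx hLy hxx hxy hyx hyy (hc m)
    have hPn : ∀ n : ℕ, (n : ℂ) • c n ∈ commSpan := by
      intro n
      have hval : Aux.P n (EL f) = (n : ℂ) • c n := by
        calc Aux.P n (EL f) = Aux.P n (EL (c.sum fun _ v => v)) := by rw [hsum]
          _ = c.sum fun m v => Aux.P n (EL v) := by
              rw [map_finsuppSum, map_finsuppSum]
          _ = c.sum fun m _ => (m : ℂ) • Aux.P n (c m) := by
              apply Finsupp.sum_congr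
              intro m _
              rw [hELc m, map_smul]
          _ = (n : ℂ) • Aux.P n (c n) := by
              apply Finsupp.sum_eq_single
              · intro b _ hbn
                rw [Aux.P_homog_ne (hc b) hbn, smul_zero]
              · intro h
                rw [h, map_zero, smul_zero]
          _ = (n : ℂ) • c n := by rw [Aux.P_homog_eq (hc n)]
      rw [← hval]
      exact Aux.P_comm hEf
    have hcn : ∀ n : ℕ, n ≠ 0 → c n ∈ commSpan := by
      intro n hn
      have h0 : (n : ℂ) ≠ 0 := Nat.cast_ne_zero.mpr hn
      have h := Submodule.smul_mem commSpan ((n : ℂ)⁻¹) (hPn n)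
      rwa [inv_smul_smul₀ h0] at h
    obtain ⟨r, hr⟩ := Aux.homog_zero_eq (hc 0)
    refine ⟨r, ?_⟩
    have hdiff : f - algebraMap ℂ A2 r = ∑ m ∈ c.support.erase 0, c m := by
      rw [← hr, ← hsum, Finsupp.sum]
      by_cases h0 : 0 ∈ c.support
      · rw [← Finset.add_sum_erase _ _ h0, add_sub_cancel_left]
      · rw [Finset.erase_eq_of_notMem h0, Finsupp.notMem_support_iff.mp h0, sub_zero]
    rw [hdiff]
    exact Submodule.sum_mem _ fun m hm => hcn m (Finset.ne_of_mem_erase hm)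

end
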